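/- Let θ be a nonempty rim with θ̂ ≠ ∅ whose north-east arm is connected to θ̂, and set a = |θ| - |θ̂|. Then for every integer p ≥ 1 one has B(θ,p) = B(θ̂, p-a) - B(θ̂, p-a+1). -/

import Mathlib

/-- `hcoef a b = Σ_{j=0}^{min(a,b)} (-1)^j 2^{a-j} binom(a,j)`; it is `0` when `b < 0`. -/
def hcoef (a : ℕ) (b : ℤ) : ℤ :=
  ∑ j ∈ Finset.range (a + 1),
    if (j : ℤ) ≤ b then (-1) ^ j * 2 ^ (a - j) * (a.choose j) else 0

attribute [local instance] Classical.propDecidable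

/-- The south-east corners of a finite set of boxes: boxes `(i,j)` such that
neither `(i+1,j)` nor `(i,j+1)` belongs to the set. -/
def seCorners (θ : Finset (ℤ × ℤ)) : Finset (ℤ × ℤ) :=
  θ.filter fun b => (b.1 + 1, b.2) ∉ θ ∧ (b.1, b.2 + 1) ∉ θ

/-- The south-east rim of `θ`: boxes `(i,j) ∈ θ` such that no box `(i',j') ∈ θ`
has `i' > i` and `j' > j`. -/
def seRim (θ : Finset (ℤ × ℤ)) : Finset (ℤ × ℤ) :=
  θ.filter fun b => ∀ b' ∈ θ, ¬ (b.1 < b'.1 ∧ b.2 < b'.2)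

/-- `d(θ)`: the number of boxes in the south-east rim of `θ`. -/
def dRim (θ : Finset (ℤ × ℤ)) : ℕ := (seRim θ).card

/-- `θ` is a rim if it equals its own south-east rim. -/
def IsRim (θ : Finset (ℤ × ℤ)) : Prop := θ = seRim θ

/-- Two boxes are adjacent (connected) if they share a side. -/
def Adjacent (b b' : ℤ × ℤ) : Prop := |b.1 - b'.1| + |b.2 - b'.2| = 1

/-- `b'` can be reached from `b` by a chain of adjacent boxes of `θ`. -/
def Reach (θ : Finset (ℤ × ℤ)) (b b' : ℤ × ℤ) : Prop :=
  Relation.ReflTransGen (fun x y => y ∈ θ ∧ Adjacent x y) b b'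

/-- The connected components of `θ`. -/
noncomputable def comps (θ : Finset (ℤ × ℤ)) : Finset (Finset (ℤ × ℤ)) :=
  θ.image fun b => θ.filter fun b' => Reach θ b b'

/-- `N(θ)`: the number of connected components of `θ`. -/
noncomputable def Ncomp (θ : Finset (ℤ × ℤ)) : ℕ := (comps θ).card

/-- `N⁻(θ) = max(N(θ) - 1, 0)`. -/
noncomputable def Nminus (θ : Finset (ℤ × ℤ)) : ℕ := Ncomp θ - 1

/-- `N'(θ)`: the number of connected components of `θ` containing no diagonal box. -/
noncomputable def Nprime (θ : Finset (ℤ × ℤ)) : ℕ :=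
  ((comps θ).filter fun c => ∀ b ∈ c, b.1 ≠ b.2).card

/-- `B(θ,p) = Σ_S (-1)^{|S|} h(N⁻(θ∖S), d(θ∖S) - p)`, the sum over subsets `S`
of the set of south-east corners of `θ`. -/
noncomputable def Bcoef (θ : Finset (ℤ × ℤ)) (p : ℤ) : ℤ :=
  ∑ S ∈ (seCorners θ).powerset,
    (-1) ^ S.card * hcoef (Nminus (θ \ S)) ((dRim (θ \ S) : ℤ) - p)

/-- `C(θ,p) = Σ_S (-1)^{|S|} h(N'(θ∖S), d(θ∖S) - p)`, the sum over subsets `S`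
of the set of south-east corners of `θ`. -/
noncomputable def Ccoef (θ : Finset (ℤ × ℤ)) (p : ℤ) : ℤ :=
  ∑ S ∈ (seCorners θ).powerset,
    (-1) ^ S.card * hcoef (Nprime (θ \ S)) ((dRim (θ \ S) : ℤ) - p)

/-- A strict partition with largest part at most `n`, encoded as a function
with `lam i = 0` for `i` beyond the length. -/
def IsStrictPartition (n : ℕ) (lam : ℤ → ℤ) : Prop :=
  lam 1 ≤ (n : ℤ) ∧ (∀ i : ℤ, 1 ≤ i → 0 ≤ lam i) ∧
  (∀ i : ℤ, 1 ≤ i → lam (i + 1) = 0 ∨ lam (i + 1) < lam i)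

/-- The shifted Young diagram `{(i,j) : 1 ≤ i ≤ ℓ, i ≤ j ≤ λ_i + i - 1}` of a
strict partition. -/
noncomputable def shiftedD (n : ℕ) (lam : ℤ → ℤ) : Finset (ℤ × ℤ) :=
  (Finset.Icc (1 : ℤ) (n : ℤ) ×ˢ Finset.Icc (1 : ℤ) (2 * (n : ℤ))).filter
    fun b => b.1 ≤ b.2 ∧ b.2 ≤ lam b.1 + b.1 - 1

/-- `θ` is a shifted skew diagram: `θ = ν/λ` for strict partitions `λ ⊆ ν`
with `ν_1 ≤ n`. -/
def IsShiftedSkewDiagram (n : ℕ) (θ : Finset (ℤ × ℤ)) : Prop :=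
  ∃ lam nu : ℤ → ℤ, IsStrictPartition n lam ∧ IsStrictPartition n nu ∧
    (∀ i : ℤ, 1 ≤ i → lam i ≤ nu i) ∧ θ = shiftedD n nu \ shiftedD n lam

/-- All boxes of `φ` lie in a single row. -/
def IsRow (φ : Finset (ℤ × ℤ)) : Prop := ∃ i : ℤ, ∀ b ∈ φ, b.1 = i

/-- All boxes of `φ` lie in a single column. -/
def IsCol (φ : Finset (ℤ × ℤ)) : Prop := ∃ j : ℤ, ∀ b ∈ φ, b.2 = j

/-- `φ` is a row or a column. -/
def IsRowOrCol (φ : Finset (ℤ × ℤ)) : Prop := IsRow φ ∨ IsCol φ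

/-- The intersection of `θ` with the `s × s` square whose upper-right box
is `(i0, j0)`. -/
def armAt (θ : Finset (ℤ × ℤ)) (i0 j0 : ℤ) (s : ℕ) : Finset (ℤ × ℤ) :=
  θ.filter fun b =>
    i0 ≤ b.1 ∧ b.1 ≤ i0 + (s : ℤ) - 1 ∧ j0 - (s : ℤ) + 1 ≤ b.2 ∧ b.2 ≤ j0

lemma adj_symm {b b' : ℤ × ℤ} (h : Adjacent b b') : Adjacent b' b := by
  unfold Adjacent at *; rw [abs_sub_comm, abs_sub_comm b'.2]; exact h

lemma adj_ne {b b' : ℤ × ℤ} (h : Adjacent b b') : b ≠ b' := by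
  rintro rfl; simp [Adjacent] at h

lemma adj_cases {u v : ℤ × ℤ} (h : Adjacent u v) :
    v = (u.1 + 1, u.2) ∨ v = (u.1 - 1, u.2) ∨ v = (u.1, u.2 + 1) ∨ v = (u.1, u.2 - 1) := by
  obtain ⟨a, b⟩ := u; obtain ⟨c, d⟩ := v
  unfold Adjacent at h; simp only [Prod.mk.injEq]
  rcases abs_cases (a - c) with ⟨h1, _⟩ | ⟨h1, _⟩ <;>
    rcases abs_cases (b - d) with ⟨h2, _⟩ | ⟨h2, _⟩ <;> rw [h1, h2] at h <;> omega

lemma adj_right (i j : ℤ) : Adjacent (i, j) (i, j + 1) := by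
  simp [Adjacent]

lemma adj_down (i j : ℤ) : Adjacent (i, j) (i + 1, j) := by
  simp [Adjacent]

lemma reach_mem {θ : Finset (ℤ × ℤ)} {b c : ℤ × ℤ} (h : Reach θ b c) : c = b ∨ c ∈ θ := by
  induction h with
  | refl => exact Or.inl rfl
  | tail _ h2 _ => exact Or.inr h2.1

lemma reach_mono {θ ψ : Finset (ℤ × ℤ)} (hs : θ ⊆ ψ) {b c : ℤ × ℤ} (h : Reach θ b c) :
    Reach ψ b c := by
  induction h with
  | refl => exact Relation.ReflTransGen.refl
  | tail _ h2 ih => exact ih.tail ⟨hs h2.1, h2.2⟩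

lemma reach_single {θ : Finset (ℤ × ℤ)} {b c : ℤ × ℤ} (hc : c ∈ θ) (h : Adjacent b c) :
    Reach θ b c := Relation.ReflTransGen.single ⟨hc, h⟩

lemma reach_trans {θ : Finset (ℤ × ℤ)} {a b c : ℤ × ℤ} (h : Reach θ a b) (h' : Reach θ b c) :
    Reach θ a c := Relation.ReflTransGen.trans h h'

lemma reach_symm {θ : Finset (ℤ × ℤ)} {b c : ℤ × ℤ} (hb : b ∈ θ) (h : Reach θ b c) :
    Reach θ c b := by
  induction h with
  | refl => exact Relation.ReflTransGen.refl
  | @tail x y h1 h2 ih =>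
      refine reach_trans (reach_single ?_ (adj_symm h2.2)) ih
      rcases reach_mem h1 with rfl | hx
      · exact hb
      · exact hx

noncomputable def cset (θ : Finset (ℤ × ℤ)) (b : ℤ × ℤ) : Finset (ℤ × ℤ) :=
  θ.filter fun b' => Reach θ b b'

lemma comps_eq (θ : Finset (ℤ × ℤ)) : comps θ = θ.image (cset θ) := rfl

lemma cset_subset (θ : Finset (ℤ × ℤ)) (b : ℤ × ℤ) : cset θ b ⊆ θ := Finset.filter_subset _ _

lemma mem_cset {θ : Finset (ℤ × ℤ)} {b c : ℤ × ℤ} :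
    c ∈ cset θ b ↔ c ∈ θ ∧ Reach θ b c := Finset.mem_filter

lemma self_mem_cset {θ : Finset (ℤ × ℤ)} {b : ℤ × ℤ} (hb : b ∈ θ) : b ∈ cset θ b :=
  mem_cset.2 ⟨hb, Relation.ReflTransGen.refl⟩

lemma cset_eq_of_reach {θ : Finset (ℤ × ℤ)} {b b' : ℤ × ℤ} (hb : b ∈ θ) (h : Reach θ b b') :
    cset θ b = cset θ b' := by
  ext c
  simp only [mem_cset]
  constructor
  · rintro ⟨hc, hr⟩; exact ⟨hc, reach_trans (reach_symm hb h) hr⟩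
  · rintro ⟨hc, hr⟩; exact ⟨hc, reach_trans h hr⟩

lemma Ncomp_empty : Ncomp ∅ = 0 := by simp [Ncomp, comps]

lemma Ncomp_pos {θ : Finset (ℤ × ℤ)} (h : θ.Nonempty) : 1 ≤ Ncomp θ :=
  Finset.card_pos.2 (h.image _)

lemma Ncomp_conn {θ : Finset (ℤ × ℤ)} (h : θ.Nonempty)
    (hc : ∀ b ∈ θ, ∀ b' ∈ θ, Reach θ b b') : Ncomp θ = 1 := by
  have : comps θ = {θ} := by
    rw [comps_eq]
    have : ∀ b ∈ θ, cset θ b = θ := by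
      intro b hb
      apply Finset.Subset.antisymm (cset_subset _ _)
      intro c hcm; exact mem_cset.2 ⟨hcm, hc b hb c hcm⟩
    rw [Finset.image_congr (fun b hb => this b hb)]
    exact Finset.image_const h θ
  rw [Ncomp, this, Finset.card_singleton]

-- continuation: attach/split lemmas (appended to s1 content for testing)
section Graph
variable {α φ : Finset (ℤ × ℤ)} {v : ℤ × ℤ}

lemma transfer1 (hd : ∀ b ∈ α, b ∉ φ)
    (hcross : ∀ u ∈ α, ∀ w ∈ φ, Adjacent u w → w = v) {b c : ℤ × ℤ} (hb : b ∈ φ)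
    (h : Reach (α ∪ φ) b c) :
    (c ∈ φ ∧ Reach φ b c) ∨ (c ∈ α ∧ Reach φ b v) := by
  induction h with
  | refl => exact Or.inl ⟨hb, Relation.ReflTransGen.refl⟩
  | @tail x y h1 h2 ih =>
      have hy := h2.1
      rcases Finset.mem_union.1 hy with hyα | hyφ
      · rcases ih with ⟨hxφ, hr⟩ | ⟨hxα, hr⟩
        · have := hcross y hyα x hxφ (adj_symm h2.2)
          subst this
          exact Or.inr ⟨hyα, hr⟩
        · exact Or.inr ⟨hyα, hr⟩
      · rcases ih with ⟨hxφ, hr⟩ | ⟨hxα, hr⟩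
        · exact Or.inl ⟨hyφ, hr.tail ⟨hyφ, h2.2⟩⟩
        · have := hcross x hxα y hyφ h2.2
          subst this
          exact Or.inl ⟨hyφ, hr⟩

lemma transfer2 (hd : ∀ b ∈ α, b ∉ φ)
    (hcross : ∀ u ∈ α, ∀ w ∈ φ, Adjacent u w → w = v) {b c : ℤ × ℤ} (hb : b ∈ α) (hv : v ∈ φ)
    (h : Reach (α ∪ φ) b c) :
    c ∈ α ∨ (c ∈ φ ∧ Reach φ v c) := by
  induction h with
  | refl => exact Or.inl hb
  | @tail x y h1 h2 ih =>
      have hy := h2.1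
      rcases Finset.mem_union.1 hy with hyα | hyφ
      · exact Or.inl hyα
      · rcases ih with hxα | ⟨hxφ, hr⟩
        · have := hcross x hxα y hyφ h2.2
          subst this
          exact Or.inr ⟨hyφ, Relation.ReflTransGen.refl⟩
        · exact Or.inr ⟨hyφ, hr.tail ⟨hyφ, h2.2⟩⟩

lemma Ncomp_union_attach (hv : v ∈ φ) (hd : ∀ b ∈ α, b ∉ φ)
    (hconnα : ∀ b ∈ α, ∀ b' ∈ α, Reach α b b') (hne : α.Nonempty)
    (hedge : ∃ u ∈ α, Adjacent u v)
    (hcross : ∀ u ∈ α, ∀ w ∈ φ, Adjacent u w → w = v) :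
    Ncomp (α ∪ φ) = Ncomp φ := by
  obtain ⟨u0, hu0, hu0v⟩ := hedge
  -- reach facts
  have hαsub : α ⊆ α ∪ φ := Finset.subset_union_left
  have hφsub : φ ⊆ α ∪ φ := Finset.subset_union_right
  have reach_to_v : ∀ b ∈ α, Reach (α ∪ φ) b v := by
    intro b hb
    exact reach_trans (reach_mono hαsub (hconnα b hb u0 hu0))
      (reach_single (hφsub hv) hu0v)
  have reach_from_v : ∀ c ∈ α, Reach (α ∪ φ) v c := by
    intro c hc
    exact reach_trans (reach_single (hαsub hu0) (adj_symm hu0v))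
      (reach_mono hαsub (hconnα u0 hu0 c hc))
  -- key component computations
  set f : Finset (ℤ × ℤ) → Finset (ℤ × ℤ) := fun c => if v ∈ c then c ∪ α else c with hf
  have key1 : ∀ b ∈ φ, cset (α ∪ φ) b = f (cset φ b) := by
    intro b hb
    by_cases hbv : Reach φ b v
    · have hvmem : v ∈ cset φ b := mem_cset.2 ⟨hv, hbv⟩
      rw [hf]; simp only [hvmem, if_pos]
      ext c
      simp only [mem_cset, Finset.mem_union]
      constructor
      · rintro ⟨hc, hr⟩
        rcases transfer1 hd hcross hb hr with ⟨h1, h2⟩ | ⟨h1, h2⟩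
        · exact Or.inl ⟨h1, h2⟩
        · exact Or.inr h1
      · rintro (⟨h1, h2⟩ | hc)
        · exact ⟨Or.inr h1, reach_mono hφsub h2⟩
        · exact ⟨Or.inl hc, reach_trans (reach_mono hφsub hbv) (reach_from_v c hc)⟩
    · have hvmem : v ∉ cset φ b := by
        intro hmem; exact hbv (mem_cset.1 hmem).2
      rw [hf]; simp only [hvmem, if_neg, not_false_iff]
      ext c
      simp only [mem_cset, Finset.mem_union]
      constructor
      · rintro ⟨hc, hr⟩
        rcases transfer1 hd hcross hb hr with ⟨h1, h2⟩ | ⟨h1, h2⟩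
        · exact ⟨h1, h2⟩
        · exact absurd h2 hbv
      · rintro ⟨hc, hr⟩
        exact ⟨Or.inr hc, reach_mono hφsub hr⟩
  have key2 : ∀ b ∈ α, cset (α ∪ φ) b = f (cset φ v) := by
    intro b hb
    have hvmem : v ∈ cset φ v := self_mem_cset hv
    rw [hf]; simp only [hvmem, if_pos]
    ext c
    simp only [mem_cset, Finset.mem_union]
    constructor
    · rintro ⟨hc, hr⟩
      rcases transfer2 hd hcross hb hv hr with h1 | ⟨h1, h2⟩
      · exact Or.inr h1
      · exact Or.inl ⟨h1, h2⟩
    · rintro (⟨h1, h2⟩ | hc)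
      · exact ⟨Or.inr h1, reach_trans (reach_to_v b hb) (reach_mono hφsub h2)⟩
      · exact ⟨Or.inl hc, reach_trans (reach_to_v b hb) (reach_from_v c hc)⟩
  -- comps equality
  have hcomps : comps (α ∪ φ) = (comps φ).image f := by
    rw [comps_eq, comps_eq, Finset.image_union, Finset.image_image]
    have h1 : α.image (cset (α ∪ φ)) = {f (cset φ v)} := by
      rw [Finset.image_congr (fun b hb => key2 b hb)]
      exact Finset.image_const hne _
    have h2 : φ.image (cset (α ∪ φ)) = φ.image (f ∘ cset φ) := by
      apply Finset.image_congr
      intro b hb; exact key1 b hb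
    rw [h1, h2, ← Finset.image_image]
    apply Finset.Subset.antisymm
    · apply Finset.union_subset
      · simp only [Finset.singleton_subset_iff]
        exact Finset.mem_image_of_mem f (Finset.mem_image_of_mem _ hv)
      · exact Finset.Subset.refl _
    · exact Finset.subset_union_right
  rw [Ncomp, Ncomp, hcomps]
  apply Finset.card_image_of_injOn
  intro c1 hc1 c2 hc2 heq
  have hsub : ∀ c ∈ comps φ, c ⊆ φ := by
    intro c hc
    rw [comps_eq] at hc
    obtain ⟨b, _, rfl⟩ := Finset.mem_image.1 hc
    exact cset_subset _ _
  have hrec : ∀ c ∈ comps φ, f c ∩ φ = c := by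
    intro c hc
    rw [hf]
    by_cases hvc : v ∈ c
    · simp only [hvc, if_pos]
      rw [Finset.union_inter_distrib_right]
      have : α ∩ φ = ∅ := by
        rw [Finset.eq_empty_iff_forall_notMem]
        intro x hx
        exact hd x (Finset.mem_inter.1 hx).1 (Finset.mem_inter.1 hx).2
      rw [this, Finset.union_empty, Finset.inter_eq_left.2 (hsub c hc)]
    · simp only [hvc, if_neg, not_false_iff]
      exact Finset.inter_eq_left.2 (hsub c hc)
  rw [← hrec c1 hc1, ← hrec c2 hc2, heq]

lemma Ncomp_union_noadj (hd : ∀ b ∈ α, b ∉ φ)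
    (hcross : ∀ u ∈ α, ∀ w ∈ φ, ¬ Adjacent u w) :
    Ncomp (α ∪ φ) = Ncomp α + Ncomp φ := by
  have hαsub : α ⊆ α ∪ φ := Finset.subset_union_left
  have hφsub : φ ⊆ α ∪ φ := Finset.subset_union_right
  have t1 : ∀ b ∈ φ, ∀ c, Reach (α ∪ φ) b c → c ∈ φ ∧ Reach φ b c := by
    intro b hb c h
    induction h with
    | refl => exact ⟨hb, Relation.ReflTransGen.refl⟩
    | @tail x y h1 h2 ih =>
        rcases Finset.mem_union.1 h2.1 with hyα | hyφ
        · exact absurd (adj_symm h2.2) (hcross y hyα x ih.1)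
        · exact ⟨hyφ, ih.2.tail ⟨hyφ, h2.2⟩⟩
  have t2 : ∀ b ∈ α, ∀ c, Reach (α ∪ φ) b c → c ∈ α ∧ Reach α b c := by
    intro b hb c h
    induction h with
    | refl => exact ⟨hb, Relation.ReflTransGen.refl⟩
    | @tail x y h1 h2 ih =>
        rcases Finset.mem_union.1 h2.1 with hyα | hyφ
        · exact ⟨hyα, ih.2.tail ⟨hyα, h2.2⟩⟩
        · exact absurd h2.2 (hcross x ih.1 y hyφ)
  have k1 : ∀ b ∈ φ, cset (α ∪ φ) b = cset φ b := by
    intro b hb; ext c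
    simp only [mem_cset, Finset.mem_union]
    constructor
    · rintro ⟨_, hr⟩; exact t1 b hb c hr
    · rintro ⟨hc, hr⟩; exact ⟨Or.inr hc, reach_mono hφsub hr⟩
  have k2 : ∀ b ∈ α, cset (α ∪ φ) b = cset α b := by
    intro b hb; ext c
    simp only [mem_cset, Finset.mem_union]
    constructor
    · rintro ⟨_, hr⟩; exact t2 b hb c hr
    · rintro ⟨hc, hr⟩; exact ⟨Or.inl hc, reach_mono hαsub hr⟩
  have hcomps : comps (α ∪ φ) = comps α ∪ comps φ := by
    rw [comps_eq, comps_eq, comps_eq, Finset.image_union,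
      Finset.image_congr (fun b hb => k2 b hb), Finset.image_congr (fun b hb => k1 b hb)]
  rw [Ncomp, Ncomp, Ncomp, hcomps, Finset.card_union_of_disjoint]
  rw [Finset.disjoint_left]
  intro c hcα hcφ
  rw [comps_eq] at hcα hcφ
  obtain ⟨b1, hb1, rfl⟩ := Finset.mem_image.1 hcα
  obtain ⟨b2, hb2, heq⟩ := Finset.mem_image.1 hcφ
  have : b1 ∈ cset α b1 := self_mem_cset hb1
  rw [← heq] at this
  exact hd b1 hb1 (cset_subset φ b2 this)

end Graph

-- segment connectivity helpers
lemma reach_down_nat (φ : Finset (ℤ × ℤ)) (i j : ℤ) :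
    ∀ m : ℕ, (∀ t : ℤ, 0 ≤ t → t ≤ m → (i + t, j) ∈ φ) → Reach φ (i, j) (i + m, j) := by
  intro m
  induction m with
  | zero => intro _; simp only [Nat.cast_zero, add_zero]; exact Relation.ReflTransGen.refl
  | succ k ih =>
      intro hall
      have h1 : Reach φ (i, j) (i + k, j) := ih (fun t ht1 ht2 => hall t ht1 (by omega))
      have h2 : ((i + (k + 1) : ℤ), j) ∈ φ := hall (k + 1) (by positivity) (by push_cast; omega)
      refine h1.tail ⟨by push_cast at h2 ⊢; exact h2, ?_⟩
      have := adj_down (i + k) j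
      convert this using 2 <;> push_cast <;> ring
lemma reach_right_nat (φ : Finset (ℤ × ℤ)) (i j : ℤ) :
    ∀ m : ℕ, (∀ t : ℤ, 0 ≤ t → t ≤ m → (i, j + t) ∈ φ) → Reach φ (i, j) (i, j + m) := by
  intro m
  induction m with
  | zero => intro _; simp only [Nat.cast_zero, add_zero]; exact Relation.ReflTransGen.refl
  | succ k ih =>
      intro hall
      have h1 : Reach φ (i, j) (i, j + k) := ih (fun t ht1 ht2 => hall t ht1 (by omega))
      have h2 : ((i : ℤ), j + (k + 1)) ∈ φ := hall (k + 1) (by positivity) (by push_cast; omega)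
      refine h1.tail ⟨by push_cast at h2 ⊢; exact h2, ?_⟩
      have := adj_right i (j + k)
      convert this using 2 <;> push_cast <;> ring

lemma reach_col_seg {φ : Finset (ℤ × ℤ)} {i1 i2 j : ℤ} (h12 : i1 ≤ i2)
    (hall : ∀ t : ℤ, i1 ≤ t → t ≤ i2 → (t, j) ∈ φ) : Reach φ (i1, j) (i2, j) := by
  have := reach_down_nat φ i1 j (i2 - i1).toNat
    (fun t ht1 ht2 => hall (i1 + t) (by omega) (by omega))
  rwa [show (i1 + ((i2 - i1).toNat : ℤ)) = i2 by omega] at this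

lemma reach_row_seg {φ : Finset (ℤ × ℤ)} {i j1 j2 : ℤ} (h12 : j1 ≤ j2)
    (hall : ∀ t : ℤ, j1 ≤ t → t ≤ j2 → (i, t) ∈ φ) : Reach φ (i, j1) (i, j2) := by
  have := reach_right_nat φ i j1 (j2 - j1).toNat
    (fun t ht1 ht2 => hall (j1 + t) (by omega) (by omega))
  rwa [show (j1 + ((j2 - j1).toNat : ℤ)) = j2 by omega] at this

lemma col_conn {φ : Finset (ℤ × ℤ)} {i1 i2 j : ℤ}
    (hφ : ∀ b ∈ φ, b.2 = j ∧ i1 ≤ b.1 ∧ b.1 ≤ i2)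
    (hall : ∀ t : ℤ, i1 ≤ t → t ≤ i2 → (t, j) ∈ φ) :
    ∀ b ∈ φ, ∀ b' ∈ φ, Reach φ b b' := by
  intro b hb b' hb'
  obtain ⟨hbj, hb1, hb2⟩ := hφ b hb
  obtain ⟨hbj', hb1', hb2'⟩ := hφ b' hb'
  have e1 : b = (b.1, j) := by rw [← hbj]
  have e2 : b' = (b'.1, j) := by rw [← hbj']
  rw [e1, e2]
  have htop : (i1, j) ∈ φ := hall i1 le_rfl (le_trans hb1 hb2)
  have r1 : Reach φ (i1, j) (b.1, j) := reach_col_seg hb1 (fun t ht1 ht2 => hall t ht1 (le_trans ht2 hb2))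
  have r2 : Reach φ (i1, j) (b'.1, j) := reach_col_seg hb1' (fun t ht1 ht2 => hall t ht1 (le_trans ht2 hb2'))
  exact reach_trans (reach_symm htop r1) r2

lemma row_conn {φ : Finset (ℤ × ℤ)} {i j1 j2 : ℤ}
    (hφ : ∀ b ∈ φ, b.1 = i ∧ j1 ≤ b.2 ∧ b.2 ≤ j2)
    (hall : ∀ t : ℤ, j1 ≤ t → t ≤ j2 → (i, t) ∈ φ) :
    ∀ b ∈ φ, ∀ b' ∈ φ, Reach φ b b' := by
  intro b hb b' hb'
  obtain ⟨hbj, hb1, hb2⟩ := hφ b hb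
  obtain ⟨hbj', hb1', hb2'⟩ := hφ b' hb'
  have e1 : b = (i, b.2) := by rw [← hbj]
  have e2 : b' = (i, b'.2) := by rw [← hbj']
  rw [e1, e2]
  have htop : (i, j1) ∈ φ := hall j1 le_rfl (le_trans hb1 hb2)
  have r1 : Reach φ (i, j1) (i, b.2) := reach_row_seg hb1 (fun t ht1 ht2 => hall t ht1 (le_trans ht2 hb2))
  have r2 : Reach φ (i, j1) (i, b'.2) := reach_row_seg hb1' (fun t ht1 ht2 => hall t ht1 (le_trans ht2 hb2'))
  exact reach_trans (reach_symm htop r1) r2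

-- rim basics
lemma rim_pair {θ : Finset (ℤ × ℤ)} (hrim : IsRim θ) {b b' : ℤ × ℤ}
    (hb : b ∈ θ) (hb' : b' ∈ θ) : ¬ (b.1 < b'.1 ∧ b.2 < b'.2) := by
  rw [hrim] at hb
  exact (Finset.mem_filter.1 hb).2 b' hb'

lemma isRim_subset {θ φ : Finset (ℤ × ℤ)} (hrim : IsRim θ) (hsub : φ ⊆ θ) : IsRim φ := by
  unfold IsRim seRim
  apply Finset.Subset.antisymm
  · intro b hb
    rw [Finset.mem_filter]
    exact ⟨hb, fun b' hb' => rim_pair hrim (hsub hb) (hsub hb')⟩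
  · exact Finset.filter_subset _ _

lemma dRim_eq_card {φ : Finset (ℤ × ℤ)} (hrim : IsRim φ) : dRim φ = φ.card := by
  rw [dRim, ← hrim]

lemma seCorners_subset (θ : Finset (ℤ × ℤ)) : seCorners θ ⊆ θ := Finset.filter_subset _ _

-- hcoef recursion
lemma hcoef_succ (m : ℕ) (b : ℤ) : hcoef (m + 1) b = 2 * hcoef m b - hcoef m (b - 1) := by
  unfold hcoef
  rw [Finset.sum_range_succ']
  have e1 : (∑ i ∈ Finset.range (m + 1),
      if ((i : ℤ) + 1) ≤ b then (-1 : ℤ) ^ (i + 1) * 2 ^ (m - i) * (m.choose i) else 0)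
      = - (∑ j ∈ Finset.range (m + 1),
      if (j : ℤ) ≤ b - 1 then (-1 : ℤ) ^ j * 2 ^ (m - j) * (m.choose j) else 0) := by
    rw [← Finset.sum_neg_distrib]
    apply Finset.sum_congr rfl
    intro i _
    simp only [show (((i : ℤ) + 1) ≤ b) ↔ ((i : ℤ) ≤ b - 1) from by omega]
    by_cases hib : ((i : ℤ)) ≤ b - 1
    · simp only [hib, if_pos]; ring
    · simp only [hib, if_neg, not_false_iff, neg_zero]
  have e2 : (∑ i ∈ Finset.range (m + 1),
      if ((i : ℤ) + 1) ≤ b then (-1 : ℤ) ^ (i + 1) * 2 ^ (m - i) * (m.choose (i + 1)) else 0)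
      + (if ((0 : ℕ) : ℤ) ≤ b then (-1 : ℤ) ^ (0 : ℕ) * 2 ^ (m + 1 - 0) * ((m + 1).choose 0) else 0)
      = 2 * (∑ j ∈ Finset.range (m + 1),
      if (j : ℤ) ≤ b then (-1 : ℤ) ^ j * 2 ^ (m - j) * (m.choose j) else 0) := by
    conv_rhs => rw [Finset.mul_sum, Finset.sum_range_succ']
    rw [Finset.sum_range_succ]
    congr 1
    · have hz : (if ((m : ℤ) + 1) ≤ b then (-1 : ℤ) ^ (m + 1) * 2 ^ (m - m) * (m.choose (m + 1)) else 0) = 0 := by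
        simp [Nat.choose_succ_self]
      rw [hz, add_zero]
      apply Finset.sum_congr rfl
      intro k hk
      rw [Finset.mem_range] at hk
      push_cast
      by_cases hkb : ((k : ℤ) + 1) ≤ b
      · simp only [hkb, if_pos]
        have : m - k = (m - (k + 1)) + 1 := by omega
        rw [this]; ring
      · simp only [hkb, if_neg, not_false_iff, mul_zero]
    · push_cast
      by_cases h0 : ((0 : ℤ)) ≤ b
      · simp only [h0, if_pos, Nat.choose_zero_right, Nat.choose_zero_right]
        push_cast
        simp only [Nat.sub_zero]
        rw [pow_succ]
        ring
      · simp only [h0, if_neg, not_false_iff, mul_zero]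
  have hsplit : (∑ i ∈ Finset.range (m + 1),
      if (((i + 1 : ℕ)) : ℤ) ≤ b then (-1 : ℤ) ^ (i + 1) * 2 ^ (m + 1 - (i + 1)) * ((m + 1).choose (i + 1)) else 0)
      = (∑ i ∈ Finset.range (m + 1),
      if ((i : ℤ) + 1) ≤ b then (-1 : ℤ) ^ (i + 1) * 2 ^ (m - i) * (m.choose i) else 0)
      + (∑ i ∈ Finset.range (m + 1),
      if ((i : ℤ) + 1) ≤ b then (-1 : ℤ) ^ (i + 1) * 2 ^ (m - i) * (m.choose (i + 1)) else 0) := by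
    rw [← Finset.sum_add_distrib]
    apply Finset.sum_congr rfl
    intro i _
    push_cast
    by_cases hib : ((i : ℤ) + 1) ≤ b
    · simp only [hib, if_pos, Nat.choose_succ_succ, Nat.succ_sub_succ]
      push_cast
      ring
    · simp only [hib, if_neg, not_false_iff, add_zero]
  push_cast at hsplit e1 e2 ⊢
  linear_combination hsplit + e1 + e2

lemma dRim_sdiff_int {θ S : Finset (ℤ × ℤ)} (hrim : IsRim θ) (hS : S ⊆ θ) :
    ((dRim (θ \ S) : ℤ)) = (θ.card : ℤ) - S.card := by
  rw [dRim_eq_card (isRim_subset hrim Finset.sdiff_subset), Finset.card_sdiff_of_subset hS,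
    Nat.cast_sub (Finset.card_le_card hS)]

lemma coreC (θ A : Finset (ℤ × ℤ)) (x w : ℤ × ℤ) (p : ℤ)
    (hrim : IsRim θ) (hAsub : A ⊆ θ) (hAne : A.Nonempty)
    (hx : x ∈ θ \ A) (hw : w ∈ θ \ A)
    (hconnA : ∀ b ∈ A, ∀ b' ∈ A, Reach A b b')
    (hbridge : ∀ u ∈ A, ∀ v ∈ θ \ A, Adjacent u v → v = x)
    (hedge : ∃ u ∈ A, Adjacent u x)
    (hpend : ∀ v ∈ θ \ A, Adjacent x v → v = w) (hxw : Adjacent x w)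
    (hCeq : seCorners θ = seCorners (θ \ A))
    (hxC : x ∈ seCorners (θ \ A)) (hwC : w ∉ seCorners (θ \ A)) :
    Bcoef θ p = Bcoef (θ \ A) (p - A.card) - Bcoef (θ \ A) (p - A.card + 1) := by
  set D := θ \ A with hD
  set C0 := (seCorners D).erase x with hC0
  have hxC0 : x ∉ C0 := Finset.notMem_erase _ _
  have hins : insert x C0 = seCorners D := Finset.insert_erase hxC
  have hDsub : D ⊆ θ := Finset.sdiff_subset
  have hrimD : IsRim D := isRim_subset hrim hDsub
  have hxD : x ∈ D := hx
  have hwD : w ∈ D := hw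
  have hxnw : x ≠ w := adj_ne hxw
  have hAD : ∀ b ∈ A, b ∉ D := by
    intro b hb hbD
    exact (Finset.mem_sdiff.1 hbD).2 hb
  have hDcard : ((D.card : ℤ)) = (θ.card : ℤ) - A.card := by
    rw [hD, Finset.card_sdiff_of_subset hAsub, Nat.cast_sub (Finset.card_le_card hAsub)]
  have NA : Ncomp A = 1 := Ncomp_conn hAne hconnA
  -- rewrite all three Bcoef as sums over powerset of insert x C0
  rw [Bcoef, Bcoef, Bcoef, hCeq, ← hins,
    Finset.sum_powerset_insert hxC0, Finset.sum_powerset_insert hxC0,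
    Finset.sum_powerset_insert hxC0]
  rw [← Finset.sum_add_distrib, ← Finset.sum_add_distrib, ← Finset.sum_add_distrib,
    ← Finset.sum_sub_distrib]
  apply Finset.sum_congr rfl
  intro S hS
  rw [Finset.mem_powerset] at hS
  -- basic facts about S
  have hSx : x ∉ S := fun h => hxC0 (hS h)
  have hSD : S ⊆ D := hS.trans ((Finset.erase_subset _ _).trans (seCorners_subset D))
  have hSθ : S ⊆ θ := hSD.trans hDsub
  have hSw : w ∉ S := fun h => hwC (Finset.erase_subset _ _ (hS h))
  have hxSθ : insert x S ⊆ θ := Finset.insert_subset (hDsub hxD) hSθ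
  have hxSD : insert x S ⊆ D := Finset.insert_subset hxD hSD
  have hcardxS : (insert x S).card = S.card + 1 := Finset.card_insert_of_notMem hSx
  -- set splittings
  have split1 : θ \ S = A ∪ (D \ S) := by
    ext b
    simp only [Finset.mem_sdiff, Finset.mem_union, hD]
    constructor
    · rintro ⟨hbθ, hbS⟩
      by_cases hbA : b ∈ A
      · exact Or.inl hbA
      · exact Or.inr ⟨⟨hbθ, hbA⟩, hbS⟩
    · rintro (hbA | ⟨⟨hbθ, _⟩, hbS⟩)
      · exact ⟨hAsub hbA, fun h => hAD b hbA (hSD h)⟩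
      · exact ⟨hbθ, hbS⟩
  have split2 : θ \ insert x S = A ∪ (D \ insert x S) := by
    ext b
    simp only [Finset.mem_sdiff, Finset.mem_union, hD]
    constructor
    · rintro ⟨hbθ, hbS⟩
      by_cases hbA : b ∈ A
      · exact Or.inl hbA
      · exact Or.inr ⟨⟨hbθ, hbA⟩, hbS⟩
    · rintro (hbA | ⟨⟨hbθ, _⟩, hbS⟩)
      · exact ⟨hAsub hbA, fun h => hAD b hbA (hxSD h)⟩
      · exact ⟨hbθ, hbS⟩
  have split3 : D \ S = {x} ∪ (D \ insert x S) := by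
    ext b
    simp only [Finset.mem_sdiff, Finset.mem_union, Finset.mem_singleton, Finset.mem_insert]
    constructor
    · rintro ⟨hbD, hbS⟩
      by_cases hbx : b = x
      · exact Or.inl hbx
      · exact Or.inr ⟨hbD, fun h => h.elim hbx hbS⟩
    · rintro (rfl | ⟨hbD, hbS⟩)
      · exact ⟨hxD, hSx⟩
      · exact ⟨hbD, fun h => hbS (Or.inr h)⟩
  -- component counts
  have n1 : Ncomp (θ \ S) = Ncomp (D \ S) := by
    rw [split1]
    apply Ncomp_union_attach (v := x)
    · exact Finset.mem_sdiff.2 ⟨hxD, hSx⟩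
    · intro b hb hbm
      exact hAD b hb (Finset.mem_sdiff.1 hbm).1
    · exact hconnA
    · exact hAne
    · exact hedge
    · intro u hu v hv hadj
      exact hbridge u hu v ((Finset.mem_sdiff.1 hv).1) hadj
  have n3 : Ncomp (D \ S) = Ncomp (D \ insert x S) := by
    rw [split3]
    apply Ncomp_union_attach (v := w)
    · exact Finset.mem_sdiff.2 ⟨hwD, fun h => (Finset.mem_insert.1 h).elim (fun h' => hxnw h'.symm) hSw⟩
    · intro b hb hbm
      rw [Finset.mem_singleton] at hb
      subst hb
      exact (Finset.mem_sdiff.1 hbm).2 (Finset.mem_insert_self _ _)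
    · intro b hb b' hb'
      rw [Finset.mem_singleton] at hb hb'
      subst hb; subst hb'
      exact Relation.ReflTransGen.refl
    · exact ⟨x, Finset.mem_singleton_self x⟩
    · exact ⟨x, Finset.mem_singleton_self x, hxw⟩
    · intro u hu v hv hadj
      rw [Finset.mem_singleton] at hu
      subst hu
      exact hpend v ((Finset.mem_sdiff.1 hv).1) hadj
  have n2 : Ncomp (θ \ insert x S) = Ncomp (D \ insert x S) + 1 := by
    rw [split2]
    rw [Ncomp_union_noadj]
    · rw [NA, add_comm]
    · intro b hb hbm
      exact hAD b hb (Finset.mem_sdiff.1 hbm).1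
    · intro u hu v hv hadj
      have := hbridge u hu v ((Finset.mem_sdiff.1 hv).1) hadj
      subst this
      exact (Finset.mem_sdiff.1 hv).2 (Finset.mem_insert_self _ _)
  have npos : 1 ≤ Ncomp (D \ S) := by
    apply Ncomp_pos
    exact ⟨w, Finset.mem_sdiff.2 ⟨hwD, hSw⟩⟩
  obtain ⟨k, hk⟩ : ∃ k, Ncomp (D \ S) = k + 1 := ⟨Ncomp (D \ S) - 1, by omega⟩
  -- dRim values
  have d1 : ((dRim (θ \ S) : ℤ)) = (θ.card : ℤ) - S.card := dRim_sdiff_int hrim hSθ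
  have d2 : ((dRim (θ \ insert x S) : ℤ)) = (θ.card : ℤ) - S.card - 1 := by
    rw [dRim_sdiff_int hrim hxSθ, hcardxS]; push_cast; ring
  have d3 : ((dRim (D \ S) : ℤ)) = (θ.card : ℤ) - A.card - S.card := by
    rw [dRim_sdiff_int hrimD hSD, hDcard]
  have d4 : ((dRim (D \ insert x S) : ℤ)) = (θ.card : ℤ) - A.card - S.card - 1 := by
    rw [dRim_sdiff_int hrimD hxSD, hDcard, hcardxS]; push_cast; ring
  -- Nminus values
  have m1 : Nminus (θ \ S) = k := by rw [Nminus, n1, hk]; omega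
  have m2 : Nminus (θ \ insert x S) = k + 1 := by rw [Nminus, n2, ← n3, hk]; omega
  have m3 : Nminus (D \ S) = k := by rw [Nminus, hk]; omega
  have m4 : Nminus (D \ insert x S) = k := by rw [Nminus, ← n3, hk]; omega
  rw [m1, m2, m3, m4, d1, d2, d3, d4, hcardxS]
  -- argument normalizations
  have a1 : (θ.card : ℤ) - A.card - S.card - (p - A.card) = (θ.card : ℤ) - S.card - p := by ring
  have a2 : (θ.card : ℤ) - A.card - S.card - 1 - (p - A.card) = (θ.card : ℤ) - S.card - 1 - p := by ring
  have a3 : (θ.card : ℤ) - A.card - S.card - (p - A.card + 1) = (θ.card : ℤ) - S.card - 1 - p := by ring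
  have a4 : (θ.card : ℤ) - A.card - S.card - 1 - (p - A.card + 1) = (θ.card : ℤ) - S.card - 2 - p := by ring
  rw [a1, a2, a3, a4]
  have hrec := hcoef_succ k ((θ.card : ℤ) - S.card - 1 - p)
  have e1 : (θ.card : ℤ) - S.card - 1 - p - 1 = (θ.card : ℤ) - S.card - 2 - p := by ring
  rw [e1] at hrec
  have e2 : (θ.card : ℤ) - S.card - p - 1 = (θ.card : ℤ) - S.card - 1 - p := by ring
  rw [pow_succ]
  linear_combination ((-1 : ℤ) ^ S.card) * (-1) * hrec

lemma coreR (θ A : Finset (ℤ × ℤ)) (x0 y : ℤ × ℤ) (p : ℤ)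
    (hrim : IsRim θ) (hAsub : A ⊆ θ) (hx0 : x0 ∈ A) (hy : y ∈ θ \ A)
    (hconnA : ∀ b ∈ A, ∀ b' ∈ A, Reach A b b')
    (hbridge : ∀ u ∈ A, ∀ v ∈ θ \ A, Adjacent u v → v = y)
    (hedge : ∃ u ∈ A, Adjacent u y)
    (hA' : A.erase x0 = ∅ ∨ ((∃ u ∈ A.erase x0, Adjacent u y) ∧
      ∀ b ∈ A.erase x0, ∀ b' ∈ A.erase x0, Reach (A.erase x0) b b'))
    (hCeq : seCorners θ = insert x0 (seCorners (θ \ A)))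
    (hyC : y ∉ seCorners (θ \ A)) :
    Bcoef θ p = Bcoef (θ \ A) (p - A.card) - Bcoef (θ \ A) (p - A.card + 1) := by
  set D := θ \ A with hD
  set C0 := seCorners D with hC0
  have hDsub : D ⊆ θ := Finset.sdiff_subset
  have hrimD : IsRim D := isRim_subset hrim hDsub
  have hyD : y ∈ D := hy
  have hAD : ∀ b ∈ A, b ∉ D := by
    intro b hb hbD
    exact (Finset.mem_sdiff.1 hbD).2 hb
  have hx0C0 : x0 ∉ C0 := fun h => hAD x0 hx0 (seCorners_subset D h)
  have hDcard : ((D.card : ℤ)) = (θ.card : ℤ) - A.card := by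
    rw [hD, Finset.card_sdiff_of_subset hAsub, Nat.cast_sub (Finset.card_le_card hAsub)]
  have hAne : A.Nonempty := ⟨x0, hx0⟩
  have NA : Ncomp A = 1 := Ncomp_conn hAne hconnA
  rw [Bcoef, Bcoef, Bcoef, hCeq, ← hC0,
    Finset.sum_powerset_insert hx0C0]
  rw [← Finset.sum_add_distrib, ← Finset.sum_sub_distrib]
  apply Finset.sum_congr rfl
  intro S hS
  rw [Finset.mem_powerset] at hS
  have hSx0 : x0 ∉ S := fun h => hx0C0 (hS h)
  have hSD : S ⊆ D := hS.trans (seCorners_subset D)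
  have hSθ : S ⊆ θ := hSD.trans hDsub
  have hSy : y ∉ S := fun h => hyC (hS h)
  have hx0Sθ : insert x0 S ⊆ θ := Finset.insert_subset (hAsub hx0) hSθ
  have hcardxS : (insert x0 S).card = S.card + 1 := Finset.card_insert_of_notMem hSx0
  have hyDS : y ∈ D \ S := Finset.mem_sdiff.2 ⟨hyD, hSy⟩
  have split1 : θ \ S = A ∪ (D \ S) := by
    ext b
    simp only [Finset.mem_sdiff, Finset.mem_union, hD]
    constructor
    · rintro ⟨hbθ, hbS⟩
      by_cases hbA : b ∈ A
      · exact Or.inl hbA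
      · exact Or.inr ⟨⟨hbθ, hbA⟩, hbS⟩
    · rintro (hbA | ⟨⟨hbθ, _⟩, hbS⟩)
      · exact ⟨hAsub hbA, fun h => hAD b hbA (hSD h)⟩
      · exact ⟨hbθ, hbS⟩
  have split2 : θ \ insert x0 S = (A.erase x0) ∪ (D \ S) := by
    ext b
    simp only [Finset.mem_sdiff, Finset.mem_union, Finset.mem_insert, Finset.mem_erase, hD]
    constructor
    · rintro ⟨hbθ, hbS⟩
      by_cases hbA : b ∈ A
      · exact Or.inl ⟨fun h => hbS (Or.inl h), hbA⟩
      · exact Or.inr ⟨⟨hbθ, hbA⟩, fun h => hbS (Or.inr h)⟩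
    · rintro (⟨hbx, hbA⟩ | ⟨⟨hbθ, hbA⟩, hbS⟩)
      · exact ⟨hAsub hbA, fun h => h.elim hbx (fun h' => hAD b hbA (hSD h'))⟩
      · exact ⟨hbθ, fun h => h.elim (fun h' => (h' ▸ hbA) (h' ▸ hx0) |>.elim) hbS⟩
  have n1 : Ncomp (θ \ S) = Ncomp (D \ S) := by
    rw [split1]
    apply Ncomp_union_attach (v := y)
    · exact hyDS
    · intro b hb hbm
      exact hAD b hb (Finset.mem_sdiff.1 hbm).1
    · exact hconnA
    · exact hAne
    · exact hedge
    · intro u hu v hv hadj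
      exact hbridge u hu v ((Finset.mem_sdiff.1 hv).1) hadj
  have n2 : Ncomp (θ \ insert x0 S) = Ncomp (D \ S) := by
    rw [split2]
    rcases hA' with hempty | ⟨hedge', hconn'⟩
    · rw [hempty, Finset.empty_union]
    · apply Ncomp_union_attach (v := y)
      · exact hyDS
      · intro b hb hbm
        exact hAD b (Finset.erase_subset _ _ hb) (Finset.mem_sdiff.1 hbm).1
      · exact hconn'
      · obtain ⟨u, hu, _⟩ := hedge'
        exact ⟨u, hu⟩
      · exact hedge'
      · intro u hu v hv hadj
        exact hbridge u (Finset.erase_subset _ _ hu) v ((Finset.mem_sdiff.1 hv).1) hadj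
  have d1 : ((dRim (θ \ S) : ℤ)) = (θ.card : ℤ) - S.card := dRim_sdiff_int hrim hSθ
  have d2 : ((dRim (θ \ insert x0 S) : ℤ)) = (θ.card : ℤ) - S.card - 1 := by
    rw [dRim_sdiff_int hrim hx0Sθ, hcardxS]; push_cast; ring
  have d3 : ((dRim (D \ S) : ℤ)) = (θ.card : ℤ) - A.card - S.card := by
    rw [dRim_sdiff_int hrimD hSD, hDcard]
  rw [d1, d2, d3, hcardxS]
  rw [Nminus, Nminus, Nminus, n1, n2]
  have a1 : (θ.card : ℤ) - A.card - S.card - (p - A.card) = (θ.card : ℤ) - S.card - p := by ring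
  have a2 : (θ.card : ℤ) - A.card - S.card - (p - A.card + 1) = (θ.card : ℤ) - S.card - 1 - p := by ring
  have a3 : (θ.card : ℤ) - S.card - 1 - p = (θ.card : ℤ) - S.card - p - 1 := by ring
  rw [a1, a2, a3, pow_succ]
  ring

lemma mem_shiftedD {n : ℕ} {μ : ℤ → ℤ} {i j : ℤ} :
    ((i, j) : ℤ × ℤ) ∈ shiftedD n μ ↔
      (1 ≤ i ∧ i ≤ (n : ℤ) ∧ 1 ≤ j ∧ j ≤ 2 * (n : ℤ)) ∧
        i ≤ j ∧ j ≤ μ i + i - 1 := by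
  unfold shiftedD
  rw [Finset.mem_filter, Finset.mem_product, Finset.mem_Icc, Finset.mem_Icc]
  tauto

lemma part_sum_mono {n : ℕ} {μ : ℤ → ℤ} (hμ : IsStrictPartition n μ) {i i' : ℤ}
    (h1 : 1 ≤ i) (h2 : i ≤ i') (h3 : 1 ≤ μ i') : μ i' + i' ≤ μ i + i := by
  obtain ⟨_, hnonneg, hdec⟩ := hμ
  revert h3
  refine Int.le_induction (motive := fun k _ => 1 ≤ μ k → μ k + k ≤ μ i + i) ?_ ?_ i' h2
  · exact fun _ => le_rfl
  · intro k hle ih h3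
    rcases hdec k (le_trans h1 hle) with h0 | hlt
    · omega
    · have hih := ih (by omega)
      omega

lemma shiftedD_col_up {n : ℕ} {μ : ℤ → ℤ} (hμ : IsStrictPartition n μ) {i i' j : ℤ}
    (hm : ((i', j) : ℤ × ℤ) ∈ shiftedD n μ) (h1 : 1 ≤ i) (h2 : i ≤ i') :
    ((i, j) : ℤ × ℤ) ∈ shiftedD n μ := by
  rw [mem_shiftedD] at hm ⊢
  obtain ⟨⟨hb1, hb2, hb3, hb4⟩, hb5, hb6⟩ := hm
  have hpos : 1 ≤ μ i' := by omega
  have := part_sum_mono hμ h1 h2 hpos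
  refine ⟨⟨h1, by omega, hb3, hb4⟩, by omega, by omega⟩

lemma skew_col_contig {n : ℕ} {θ : Finset (ℤ × ℤ)} (hθ : IsShiftedSkewDiagram n θ)
    {i1 i2 i j : ℤ} (h1 : ((i1, j) : ℤ × ℤ) ∈ θ) (h2 : ((i2, j) : ℤ × ℤ) ∈ θ)
    (hi1 : i1 ≤ i) (hi2 : i ≤ i2) : ((i, j) : ℤ × ℤ) ∈ θ := by
  obtain ⟨lam, nu, hlam, hnu, _, rfl⟩ := hθ
  rw [Finset.mem_sdiff] at h1 h2 ⊢
  have hi1pos : (1 : ℤ) ≤ i1 := (mem_shiftedD.1 h1.1).1.1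
  constructor
  · exact shiftedD_col_up hnu h2.1 (by omega) hi2
  · intro hmem
    exact h1.2 (shiftedD_col_up hlam hmem hi1pos hi1)

lemma skew_row_contig {n : ℕ} {θ : Finset (ℤ × ℤ)} (hθ : IsShiftedSkewDiagram n θ)
    {i j1 j2 j : ℤ} (h1 : ((i, j1) : ℤ × ℤ) ∈ θ) (h2 : ((i, j2) : ℤ × ℤ) ∈ θ)
    (hj1 : j1 ≤ j) (hj2 : j ≤ j2) : ((i, j) : ℤ × ℤ) ∈ θ := by
  obtain ⟨lam, nu, hlam, hnu, _, rfl⟩ := hθ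
  rw [Finset.mem_sdiff] at h1 h2 ⊢
  rw [mem_shiftedD, mem_shiftedD] at h1 h2 ⊢
  obtain ⟨⟨⟨a1, a2, a3, a4⟩, a5, a6⟩, hn1⟩ := h1
  obtain ⟨⟨⟨b1, b2, b3, b4⟩, b5, b6⟩, hn2⟩ := h2
  constructor
  · exact ⟨⟨a1, a2, by omega, by omega⟩, by omega, by omega⟩
  · rintro ⟨_, _, c6⟩
    exact hn1 ⟨⟨a1, a2, a3, a4⟩, a5, by omega⟩

lemma mem_armAt {θ : Finset (ℤ × ℤ)} {i0 j0 : ℤ} {s : ℕ} {b : ℤ × ℤ} :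
    b ∈ armAt θ i0 j0 s ↔ b ∈ θ ∧
      (i0 ≤ b.1 ∧ b.1 ≤ i0 + (s : ℤ) - 1 ∧ j0 - (s : ℤ) + 1 ≤ b.2 ∧ b.2 ≤ j0) :=
  Finset.mem_filter

lemma mainK {n : ℕ} {θ : Finset (ℤ × ℤ)} (hθ : IsShiftedSkewDiagram n θ)
    (hrim : IsRim θ) {i0 j0 : ℤ} (hbox : ((i0, j0) : ℤ × ℤ) ∈ θ)
    (htop : ∀ b ∈ θ, i0 ≤ b.1) (hright : ∀ b ∈ θ, b.1 = i0 → b.2 ≤ j0)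
    {s : ℕ} (hs : 1 ≤ s) (harm : IsRowOrCol (armAt θ i0 j0 s))
    (hmax : ∀ s' : ℕ, 1 ≤ s' → IsRowOrCol (armAt θ i0 j0 s') → s' ≤ s)
    (hconn : ∃ b ∈ armAt θ i0 j0 s, ∃ b' ∈ θ \ armAt θ i0 j0 s, Adjacent b b')
    (hK : ((i0 + 1, j0) : ℤ × ℤ) ∈ θ) (p : ℤ) :
    Bcoef θ p = Bcoef (θ \ armAt θ i0 j0 s) (p - (armAt θ i0 j0 s).card)
      - Bcoef (θ \ armAt θ i0 j0 s) (p - (armAt θ i0 j0 s).card + 1) := by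
  have hrimp : ∀ b ∈ θ, ∀ b' ∈ θ, ¬ (b.1 < b'.1 ∧ b.2 < b'.2) :=
    fun b hb b' hb' => rim_pair hrim hb hb'
  have c0 : ∀ b ∈ θ, b.2 ≤ j0 := by
    intro b hb
    rcases eq_or_lt_of_le (htop b hb) with heq | hlt
    · exact hright b hb heq.symm
    · by_contra hgt
      exact hrimp (i0, j0) hbox b hb ⟨hlt, by omega⟩
  -- the maximal row index in column j0
  have hcolne : ((θ.filter (fun b => b.2 = j0)).image Prod.fst).Nonempty :=
    ⟨i0, Finset.mem_image.2 ⟨(i0, j0), Finset.mem_filter.2 ⟨hbox, rfl⟩, rfl⟩⟩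
  set m := ((θ.filter (fun b => b.2 = j0)).image Prod.fst).max' hcolne with hm
  have hmmem : ((m, j0) : ℤ × ℤ) ∈ θ := by
    have h := Finset.max'_mem _ hcolne
    rw [← hm] at h
    obtain ⟨b, hb, hb1⟩ := Finset.mem_image.1 h
    obtain ⟨hbθ, hb2⟩ := Finset.mem_filter.1 hb
    have : b = (m, j0) := Prod.ext hb1 hb2
    rwa [← this]
  have hmLe : ∀ b ∈ θ, b.2 = j0 → b.1 ≤ m := by
    intro b hb h2
    apply Finset.le_max'
    exact Finset.mem_image.2 ⟨b, Finset.mem_filter.2 ⟨hb, h2⟩, rfl⟩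
  have c3 : ∀ b ∈ θ, b.2 < j0 → m ≤ b.1 := by
    intro b hb hlt
    by_contra h
    exact hrimp b hb (m, j0) hmmem ⟨by omega, hlt⟩
  have hm1 : i0 + 1 ≤ m := hmLe (i0 + 1, j0) hK rfl
  have hcontig : ∀ i : ℤ, i0 ≤ i → i ≤ m → ((i, j0) : ℤ × ℤ) ∈ θ :=
    fun i h1 h2 => skew_col_contig hθ hbox hmmem h1 h2
  -- m ≤ i0 + s
  have hms : m ≤ i0 + s := by
    have hcast : ((m - i0).toNat : ℤ) = m - i0 := by omega
    have harm' : IsRowOrCol (armAt θ i0 j0 (m - i0).toNat) := by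
      right
      refine ⟨j0, ?_⟩
      intro b hb
      rw [mem_armAt] at hb
      obtain ⟨hbθ, h1, h2, h3, h4⟩ := hb
      by_contra hne
      have hblt : b.2 < j0 := lt_of_le_of_ne h4 hne
      have := c3 b hbθ hblt
      omega
    have := hmax _ (by omega) harm'
    omega
  -- i0 + s ≤ m
  have hsm : i0 + (s : ℤ) ≤ m := by
    rcases Nat.lt_or_ge s 2 with hs1 | hs2
    · have : s = 1 := by omega
      subst this
      push_cast
      omega
    · by_contra hgt
      push_neg at hgt
      have harmcol : ∀ b ∈ armAt θ i0 j0 s, b.2 = j0 := by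
        rcases harm with ⟨i, hrow⟩ | ⟨j, hcol⟩
        · exfalso
          have m1 : ((i0, j0) : ℤ × ℤ) ∈ armAt θ i0 j0 s :=
            mem_armAt.2 ⟨hbox, by constructor <;> push_cast <;> omega⟩
          have m2 : ((i0 + 1, j0) : ℤ × ℤ) ∈ armAt θ i0 j0 s :=
            mem_armAt.2 ⟨hK, by constructor <;> push_cast <;> omega⟩
          have e1 := hrow (i0, j0) m1
          have e2 := hrow (i0 + 1, j0) m2
          simp only at e1 e2
          omega
        · intro b hb
          have e1 := hcol (i0, j0) (mem_armAt.2 ⟨hbox, by constructor <;> push_cast <;> omega⟩)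
          simp only at e1
          rw [hcol b hb, ← e1]
      obtain ⟨u, hu, v, hv, hadj⟩ := hconn
      have huj : u.2 = j0 := harmcol u hu
      obtain ⟨huθ, hu1, hu2, hu3, hu4⟩ := mem_armAt.1 hu
      obtain ⟨hvθ, hvarm⟩ := Finset.mem_sdiff.1 hv
      rcases adj_cases hadj with hc | hc | hc | hc
      · -- v = (u.1+1, j0)
        subst hc
        apply hvarm
        rw [mem_armAt]
        have hvm : u.1 + 1 ≤ m := hmLe _ hvθ huj
        exact ⟨hvθ, by omega, by omega, by omega, by omega⟩
      · -- v = (u.1-1, j0)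
        subst hc
        apply hvarm
        rw [mem_armAt]
        have hvtop : i0 ≤ u.1 - 1 := htop _ hvθ
        exact ⟨hvθ, by omega, by omega, by omega, by omega⟩
      · -- v = (u.1, j0+1)
        subst hc
        have : u.2 + 1 ≤ j0 := c0 _ hvθ
        omega
      · -- v = (u.1, j0-1)
        subst hc
        have hvm : m ≤ u.1 := c3 (u.1, u.2 - 1) hvθ (show u.2 - 1 < j0 by omega)
        apply hvarm
        rw [mem_armAt]
        exact ⟨hvθ, by omega, by omega, by omega, by omega⟩
  have hmeq : m = i0 + (s : ℤ) := le_antisymm hms hsm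
  -- (m, j0-1) ∈ θ
  have c4 : ((m, j0 - 1) : ℤ × ℤ) ∈ θ := by
    by_contra hno
    have harm' : IsRowOrCol (armAt θ i0 j0 (s + 1)) := by
      right
      refine ⟨j0, ?_⟩
      intro b hb
      rw [mem_armAt] at hb
      obtain ⟨hbθ, h1, h2, h3, h4⟩ := hb
      by_contra hne
      have hblt : b.2 < j0 := lt_of_le_of_ne h4 hne
      have hbm := c3 b hbθ hblt
      have hb1 : b.1 = m := by push_cast at h2; omega
      have hbpair : ((m, b.2) : ℤ × ℤ) ∈ θ := by
        have : b = (m, b.2) := Prod.ext hb1 rfl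
        rwa [← this]
      have : ((m, j0 - 1) : ℤ × ℤ) ∈ θ :=
        skew_row_contig hθ hbpair hmmem (by push_cast at h3; omega) (by omega)
      exact hno this
    have := hmax (s + 1) (by omega) harm'
    omega
  -- characterization of the arm
  set A := armAt θ i0 j0 s with hA
  have hAchar : ∀ b, b ∈ A ↔ b ∈ θ ∧ b.2 = j0 ∧ b.1 < m := by
    intro b
    rw [hA, mem_armAt]
    constructor
    · rintro ⟨hbθ, h1, h2, h3, h4⟩
      rcases eq_or_lt_of_le h4 with heq | hlt
      · exact ⟨hbθ, heq, by omega⟩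
      · have := c3 b hbθ hlt
        omega
    · rintro ⟨hbθ, h2, h1⟩
      exact ⟨hbθ, htop b hbθ, by omega, by omega, by omega⟩
  apply coreC θ A (m, j0) (m, j0 - 1) p hrim (Finset.filter_subset _ _)
  · exact ⟨(i0, j0), (hAchar _).2 ⟨hbox, rfl, by omega⟩⟩
  · refine Finset.mem_sdiff.2 ⟨hmmem, ?_⟩
    intro h
    have := ((hAchar _).1 h).2.2
    simp at this
  · refine Finset.mem_sdiff.2 ⟨c4, ?_⟩
    intro h
    have := ((hAchar _).1 h).2.1
    simp at this
  · -- connectivity of A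
    apply col_conn (i1 := i0) (i2 := m - 1) (j := j0)
    · intro b hb
      obtain ⟨hbθ, h2, h1⟩ := (hAchar _).1 hb
      exact ⟨h2, htop b hbθ, by omega⟩
    · intro t ht1 ht2
      exact (hAchar _).2 ⟨hcontig t ht1 (by omega), rfl, by omega⟩
  · -- bridge
    intro u hu v hv hadj
    obtain ⟨huθ, hu2, hu1⟩ := (hAchar _).1 hu
    obtain ⟨hvθ, hvA⟩ := Finset.mem_sdiff.1 hv
    have hui := htop u huθ
    rcases adj_cases hadj with hc | hc | hc | hc
    · subst hc
      have hv2 : ((u.1 + 1, u.2) : ℤ × ℤ).2 = j0 := hu2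
      have hvm : u.1 + 1 ≤ m := hmLe _ hvθ hv2
      have hnl : ¬ (u.1 + 1 < m) := by
        intro hlt
        exact hvA ((hAchar _).2 ⟨hvθ, hv2, hlt⟩)
      have hv1 : u.1 + 1 = m := by omega
      rw [Prod.ext_iff]
      exact ⟨hv1, hu2⟩
    · exfalso
      subst hc
      apply hvA
      have hvtop : i0 ≤ u.1 - 1 := htop _ hvθ
      exact (hAchar _).2 ⟨hvθ, hu2, by omega⟩
    · exfalso
      subst hc
      have : u.2 + 1 ≤ j0 := c0 _ hvθ
      omega
    · exfalso
      subst hc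
      have : m ≤ u.1 := c3 (u.1, u.2 - 1) hvθ (show u.2 - 1 < j0 by omega)
      omega
  · -- hedge
    refine ⟨(m - 1, j0), (hAchar _).2 ⟨hcontig (m - 1) (by omega) (by omega), rfl, by omega⟩, ?_⟩
    simp [Adjacent]
  · -- hpend
    intro v hv hadj
    obtain ⟨hvθ, hvA⟩ := Finset.mem_sdiff.1 hv
    rcases adj_cases hadj with hc | hc | hc | hc
    · exfalso
      subst hc
      have : m + 1 ≤ m := hmLe _ hvθ rfl
      omega
    · exfalso
      subst hc
      exact hvA ((hAchar _).2 ⟨hvθ, rfl, by omega⟩)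
    · exfalso
      subst hc
      have : j0 + 1 ≤ j0 := c0 _ hvθ
      omega
    · rw [hc]
  · simp [Adjacent]
  · -- corners equal
    ext b
    simp only [seCorners, Finset.mem_filter, Finset.mem_sdiff]
    constructor
    · rintro ⟨hbθ, hn1, hn2⟩
      have hbA : b ∉ A := by
        intro h
        obtain ⟨_, h2, h1⟩ := (hAchar _).1 h
        apply hn1
        have : ((b.1 + 1, b.2) : ℤ × ℤ) ∈ θ := by
          rw [h2]
          exact hcontig (b.1 + 1) (by have := htop b hbθ; omega) (by omega)
        exact this
      exact ⟨⟨hbθ, hbA⟩, fun h => hn1 h.1, fun h => hn2 h.1⟩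
    · rintro ⟨⟨hbθ, hbA⟩, hn1, hn2⟩
      refine ⟨hbθ, ?_, ?_⟩
      · intro hmem
        apply hn1
        refine ⟨hmem, ?_⟩
        intro hmemA
        obtain ⟨_, h2, h1⟩ := (hAchar _).1 hmemA
        simp only at h2 h1
        have hb2 : b.2 = j0 := h2
        have : ¬ (b.1 < m) := fun h => hbA ((hAchar _).2 ⟨hbθ, hb2, h⟩)
        omega
      · intro hmem
        apply hn2
        refine ⟨hmem, ?_⟩
        intro hmemA
        obtain ⟨_, h2, h1⟩ := (hAchar _).1 hmemA
        simp only at h2 h1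
        have hblt : b.2 < j0 := by omega
        have := c3 b hbθ hblt
        omega
  · -- x is a corner of θ \ A
    simp only [seCorners, Finset.mem_filter, Finset.mem_sdiff]
    refine ⟨⟨hmmem, fun h => by simpa using ((hAchar _).1 h).2.2⟩, ?_, ?_⟩
    · rintro ⟨h1, _⟩
      have := hmLe _ h1 rfl
      simp only at this
      omega
    · rintro ⟨h1, _⟩
      have := c0 _ h1
      simp only at this
      omega
  · -- w is not a corner of θ \ A
    simp only [seCorners, Finset.mem_filter, Finset.mem_sdiff]
    rintro ⟨_, _, hn2⟩
    apply hn2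
    have hpair : ((m : ℤ), j0 - 1 + 1) = ((m : ℤ), j0) := by norm_num
    rw [show ((m, j0 - 1).1, (m, j0 - 1).2 + 1) = ((m : ℤ), j0) from by simpa using hpair]
    refine ⟨hmmem, fun h => by simpa using ((hAchar _).1 h).2.2⟩

lemma mainK' {n : ℕ} {θ : Finset (ℤ × ℤ)} (hθ : IsShiftedSkewDiagram n θ)
    (hrim : IsRim θ) {i0 j0 : ℤ} (hbox : ((i0, j0) : ℤ × ℤ) ∈ θ)
    (htop : ∀ b ∈ θ, i0 ≤ b.1) (hright : ∀ b ∈ θ, b.1 = i0 → b.2 ≤ j0)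
    {s : ℕ} (hs : 1 ≤ s) (harm : IsRowOrCol (armAt θ i0 j0 s))
    (hmax : ∀ s' : ℕ, 1 ≤ s' → IsRowOrCol (armAt θ i0 j0 s') → s' ≤ s)
    (hconn : ∃ b ∈ armAt θ i0 j0 s, ∃ b' ∈ θ \ armAt θ i0 j0 s, Adjacent b b')
    (hK : ((i0 + 1, j0) : ℤ × ℤ) ∉ θ) (p : ℤ) :
    Bcoef θ p = Bcoef (θ \ armAt θ i0 j0 s) (p - (armAt θ i0 j0 s).card)
      - Bcoef (θ \ armAt θ i0 j0 s) (p - (armAt θ i0 j0 s).card + 1) := by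
  have hrimp : ∀ b ∈ θ, ∀ b' ∈ θ, ¬ (b.1 < b'.1 ∧ b.2 < b'.2) :=
    fun b hb b' hb' => rim_pair hrim hb hb'
  have c0 : ∀ b ∈ θ, b.2 ≤ j0 := by
    intro b hb
    rcases eq_or_lt_of_le (htop b hb) with heq | hlt
    · exact hright b hb heq.symm
    · by_contra hgt
      exact hrimp (i0, j0) hbox b hb ⟨hlt, by omega⟩
  have colSingle : ∀ b ∈ θ, b.2 = j0 → b.1 = i0 := by
    intro b hb h2
    by_contra hne
    have hlt : i0 < b.1 := lt_of_le_of_ne (htop b hb) (Ne.symm hne)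
    have hbp : ((b.1, j0) : ℤ × ℤ) ∈ θ := by rw [← h2]; exact hb
    exact hK (skew_col_contig hθ hbox hbp (by omega) hlt)
  -- (i0, j0 - 1) ∈ θ
  have step1 : ((i0, j0 - 1) : ℤ × ℤ) ∈ θ := by
    by_contra hno
    have rowSingle : ∀ b ∈ θ, b.1 = i0 → b.2 = j0 := by
      intro b hb h1
      by_contra hne
      have hlt : b.2 < j0 := lt_of_le_of_ne (c0 b hb) hne
      have hbp : ((i0, b.2) : ℤ × ℤ) ∈ θ := by rw [← h1]; exact hb
      exact hno (skew_row_contig hθ hbp hbox (by omega) (by omega))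
    have armSingle : ∀ b ∈ armAt θ i0 j0 s, b = (i0, j0) := by
      intro b hb
      have hbθ := (mem_armAt.1 hb).1
      rcases harm with ⟨i, hrow⟩ | ⟨j, hcol⟩
      · have e1 := hrow (i0, j0) (mem_armAt.2 ⟨hbox, by constructor <;> push_cast <;> omega⟩)
        have e2 := hrow b hb
        simp only at e1
        have h1 : b.1 = i0 := by rw [e2, e1]
        exact Prod.ext h1 (rowSingle b hbθ h1)
      · have e1 := hcol (i0, j0) (mem_armAt.2 ⟨hbox, by constructor <;> push_cast <;> omega⟩)
        have e2 := hcol b hb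
        simp only at e1
        have h2 : b.2 = j0 := by rw [e2, e1]
        exact Prod.ext (colSingle b hbθ h2) h2
    obtain ⟨u, hu, v, hv, hadj⟩ := hconn
    obtain ⟨hvθ, hvarm⟩ := Finset.mem_sdiff.1 hv
    have hu0 := armSingle u hu
    subst hu0
    rcases adj_cases hadj with hc | hc | hc | hc
    · subst hc; exact hK hvθ
    · subst hc
      have : i0 ≤ i0 - 1 := htop _ hvθ
      omega
    · subst hc
      have : j0 + 1 ≤ j0 := c0 _ hvθ
      omega
    · subst hc; exact hno hvθ
  -- the minimal column index in row i0
  have hrowne : ((θ.filter (fun b => b.1 = i0)).image Prod.snd).Nonempty :=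
    ⟨j0, Finset.mem_image.2 ⟨(i0, j0), Finset.mem_filter.2 ⟨hbox, rfl⟩, rfl⟩⟩
  set c := ((θ.filter (fun b => b.1 = i0)).image Prod.snd).min' hrowne with hcc
  have hcMem : ((i0, c) : ℤ × ℤ) ∈ θ := by
    have h := Finset.min'_mem _ hrowne
    rw [← hcc] at h
    obtain ⟨b, hb, hb2⟩ := Finset.mem_image.1 h
    obtain ⟨hbθ, hb1⟩ := Finset.mem_filter.1 hb
    have : b = (i0, c) := Prod.ext hb1 hb2
    rwa [← this]
  have hcLe : ∀ b ∈ θ, b.1 = i0 → c ≤ b.2 := by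
    intro b hb h1
    apply Finset.min'_le
    exact Finset.mem_image.2 ⟨b, Finset.mem_filter.2 ⟨hb, h1⟩, rfl⟩
  have hc1 : c ≤ j0 - 1 := hcLe (i0, j0 - 1) step1 rfl
  have r3 : ∀ b ∈ θ, i0 < b.1 → b.2 ≤ c := by
    intro b hb hlt
    by_contra h
    exact hrimp (i0, c) hcMem b hb ⟨hlt, by omega⟩
  have rowContig : ∀ j : ℤ, c ≤ j → j ≤ j0 → ((i0, j) : ℤ × ℤ) ∈ θ :=
    fun j h1 h2 => skew_row_contig hθ hcMem hbox h1 h2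
  -- j0 - c ≤ s
  have hcs : j0 - c ≤ (s : ℤ) := by
    have hcast : ((j0 - c).toNat : ℤ) = j0 - c := by omega
    have harm' : IsRowOrCol (armAt θ i0 j0 (j0 - c).toNat) := by
      left
      refine ⟨i0, ?_⟩
      intro b hb
      rw [mem_armAt] at hb
      obtain ⟨hbθ, h1, h2, h3, h4⟩ := hb
      by_contra hne
      have hblt : i0 < b.1 := lt_of_le_of_ne h1 (Ne.symm hne)
      have := r3 b hbθ hblt
      omega
    have := hmax _ (by omega) harm'
    omega
  -- c ≤ j0 - s
  have hsc : c ≤ j0 - (s : ℤ) := by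
    by_contra hgt
    push_neg at hgt
    have hs2 : 2 ≤ (s : ℤ) := by omega
    have armIsRow : ∀ b ∈ armAt θ i0 j0 s, b.1 = i0 := by
      rcases harm with ⟨i, hrow⟩ | ⟨j, hcol⟩
      · intro b hb
        have e1 := hrow (i0, j0) (mem_armAt.2 ⟨hbox, by constructor <;> push_cast <;> omega⟩)
        simp only at e1
        rw [hrow b hb, ← e1]
      · exfalso
        have e1 := hcol (i0, j0) (mem_armAt.2 ⟨hbox, by constructor <;> push_cast <;> omega⟩)
        have e2 := hcol (i0, j0 - 1) (mem_armAt.2 ⟨step1, by constructor <;> push_cast <;> omega⟩)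
        simp only at e1 e2
        omega
    obtain ⟨u, hu, v, hv, hadj⟩ := hconn
    obtain ⟨hvθ, hvarm⟩ := Finset.mem_sdiff.1 hv
    have hu1 : u.1 = i0 := armIsRow u hu
    have huθ := (mem_armAt.1 hu).1
    have hu2 : u.2 ≤ j0 := c0 u huθ
    have hu3 : c ≤ u.2 := hcLe u huθ hu1
    rcases adj_cases hadj with hc | hc | hc | hc
    · subst hc
      have : u.2 ≤ c := r3 (u.1 + 1, u.2) hvθ (by omega)
      have hu2c : u.2 = c := le_antisymm this hu3
      apply hvarm
      rw [mem_armAt]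
      exact ⟨hvθ, by omega, by omega, by omega, by omega⟩
    · subst hc
      have : i0 ≤ u.1 - 1 := htop _ hvθ
      omega
    · subst hc
      have hle : u.2 + 1 ≤ j0 := c0 _ hvθ
      apply hvarm
      rw [mem_armAt]
      exact ⟨hvθ, by omega, by omega, by omega, by omega⟩
    · subst hc
      have : c ≤ u.2 - 1 := hcLe _ hvθ hu1
      apply hvarm
      rw [mem_armAt]
      exact ⟨hvθ, by omega, by omega, by omega, by omega⟩
  have hceq : c = j0 - (s : ℤ) := by omega
  -- (i0 + 1, j0 - s) ∈ θ
  have r4 : ((i0 + 1, j0 - (s : ℤ)) : ℤ × ℤ) ∈ θ := by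
    by_contra hno
    have harm' : IsRowOrCol (armAt θ i0 j0 (s + 1)) := by
      left
      refine ⟨i0, ?_⟩
      intro b hb
      rw [mem_armAt] at hb
      obtain ⟨hbθ, h1, h2, h3, h4⟩ := hb
      by_contra hne
      have hblt : i0 < b.1 := lt_of_le_of_ne h1 (Ne.symm hne)
      have hbc := r3 b hbθ hblt
      have hb2 : b.2 = j0 - (s : ℤ) := by push_cast at h3; omega
      have hbp : ((b.1, j0 - (s : ℤ)) : ℤ × ℤ) ∈ θ := by
        have : b = (b.1, j0 - (s : ℤ)) := Prod.ext rfl hb2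
        rwa [← this]
      have hcp : ((i0, j0 - (s : ℤ)) : ℤ × ℤ) ∈ θ := by rw [← hceq]; exact hcMem
      exact hno (skew_col_contig hθ hcp hbp (by omega) (by omega))
    have := hmax (s + 1) (by omega) harm'
    omega
  -- characterization of the arm
  set A := armAt θ i0 j0 s with hA
  have hAchar : ∀ b, b ∈ A ↔ b ∈ θ ∧ b.1 = i0 ∧ j0 - (s : ℤ) < b.2 := by
    intro b
    rw [hA, mem_armAt]
    constructor
    · rintro ⟨hbθ, h1, h2, h3, h4⟩
      rcases eq_or_lt_of_le h1 with heq | hlt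
      · exact ⟨hbθ, heq.symm, by omega⟩
      · have := r3 b hbθ hlt
        omega
    · rintro ⟨hbθ, h1, h2⟩
      exact ⟨hbθ, by omega, by omega, by omega, c0 b hbθ⟩
  have hyθ : ((i0, j0 - (s : ℤ)) : ℤ × ℤ) ∈ θ := by rw [← hceq]; exact hcMem
  apply coreR θ A (i0, j0) (i0, j0 - (s : ℤ)) p hrim (Finset.filter_subset _ _)
  · exact (hAchar _).2 ⟨hbox, rfl, by omega⟩
  · refine Finset.mem_sdiff.2 ⟨hyθ, ?_⟩
    intro h
    have := ((hAchar _).1 h).2.2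
    simp at this
  · -- connectivity of A
    apply row_conn (i := i0) (j1 := j0 - (s : ℤ) + 1) (j2 := j0)
    · intro b hb
      obtain ⟨hbθ, h1, h2⟩ := (hAchar _).1 hb
      exact ⟨h1, by omega, c0 b hbθ⟩
    · intro t ht1 ht2
      exact (hAchar _).2 ⟨rowContig t (by omega) ht2, rfl, by omega⟩
  · -- bridge
    intro u hu v hv hadj
    obtain ⟨huθ, hu1, hu2⟩ := (hAchar _).1 hu
    obtain ⟨hvθ, hvA⟩ := Finset.mem_sdiff.1 hv
    have hu3 : u.2 ≤ j0 := c0 u huθ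
    rcases adj_cases hadj with hc | hc | hc | hc
    · exfalso
      subst hc
      have : u.2 ≤ c := r3 (u.1 + 1, u.2) hvθ (by omega)
      omega
    · exfalso
      subst hc
      have : i0 ≤ u.1 - 1 := htop _ hvθ
      omega
    · exfalso
      subst hc
      apply hvA
      have hle : u.2 + 1 ≤ j0 := c0 _ hvθ
      exact (hAchar _).2 ⟨hvθ, hu1, by omega⟩
    · subst hc
      have hge : c ≤ u.2 - 1 := hcLe _ hvθ hu1
      have hnA : ¬ (j0 - (s : ℤ) < u.2 - 1) := by
        intro h
        exact hvA ((hAchar _).2 ⟨hvθ, hu1, h⟩)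
      rw [Prod.ext_iff]
      constructor
      · exact hu1
      · simp only
        omega
  · -- hedge
    refine ⟨(i0, j0 - (s : ℤ) + 1),
      (hAchar _).2 ⟨rowContig _ (by omega) (by omega), rfl, by omega⟩, ?_⟩
    simp [Adjacent]
  · -- hA'
    rcases Nat.lt_or_ge s 2 with hs1 | hs2
    · left
      rw [Finset.eq_empty_iff_forall_notMem]
      intro b hb
      rw [Finset.mem_erase] at hb
      obtain ⟨hbne, hbA⟩ := hb
      obtain ⟨hbθ, h1, h2⟩ := (hAchar _).1 hbA
      have hbs : s = 1 := by omega
      have hb2 : b.2 = j0 := by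
        have := c0 b hbθ
        rw [hbs] at h2
        push_cast at h2
        omega
      exact hbne (Prod.ext h1 hb2)
    · right
      constructor
      · refine ⟨(i0, j0 - (s : ℤ) + 1), ?_, ?_⟩
        · rw [Finset.mem_erase]
          constructor
          · rw [Ne, Prod.ext_iff]
            rintro ⟨_, h2⟩
            simp only at h2
            omega
          · exact (hAchar _).2 ⟨rowContig _ (by omega) (by omega), rfl, by omega⟩
        · simp [Adjacent]
      · apply row_conn (i := i0) (j1 := j0 - (s : ℤ) + 1) (j2 := j0 - 1)
        · intro b hb
          rw [Finset.mem_erase] at hb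
          obtain ⟨hbne, hbA⟩ := hb
          obtain ⟨hbθ, h1, h2⟩ := (hAchar _).1 hbA
          have hble : b.2 ≤ j0 := c0 b hbθ
          have : b.2 ≠ j0 := by
            intro h
            exact hbne (Prod.ext h1 h)
          exact ⟨h1, by omega, by omega⟩
        · intro t ht1 ht2
          rw [Finset.mem_erase]
          constructor
          · rw [Ne, Prod.ext_iff]
            rintro ⟨_, h2⟩
            simp only at h2
            omega
          · exact (hAchar _).2 ⟨rowContig t (by omega) (by omega), rfl, by omega⟩
  · -- corners
    have x0corner : ((i0, j0) : ℤ × ℤ) ∈ seCorners θ := by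
      rw [seCorners, Finset.mem_filter]
      refine ⟨hbox, hK, ?_⟩
      intro h
      have : j0 + 1 ≤ j0 := c0 _ h
      omega
    have hzmem : ((i0 + 1, j0 - (s : ℤ)) : ℤ × ℤ) ∈ θ \ A := by
      refine Finset.mem_sdiff.2 ⟨r4, ?_⟩
      intro h
      have := ((hAchar _).1 h).2.1
      simp at this
    ext b
    simp only [seCorners, Finset.mem_filter, Finset.mem_sdiff, Finset.mem_insert]
    constructor
    · rintro ⟨hbθ, hn1, hn2⟩
      by_cases hbx : b = (i0, j0)
      · exact Or.inl hbx
      · right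
        have hbA : b ∉ A := by
          intro h
          obtain ⟨_, h1, h2⟩ := (hAchar _).1 h
          have hble : b.2 ≤ j0 := c0 b hbθ
          have hblt : b.2 < j0 := by
            rcases eq_or_lt_of_le hble with heq | hlt
            · exact absurd (Prod.ext h1 heq) hbx
            · exact hlt
          apply hn2
          have : ((i0, b.2 + 1) : ℤ × ℤ) ∈ θ := rowContig (b.2 + 1) (by omega) (by omega)
          rw [h1]
          exact this
        exact ⟨⟨hbθ, hbA⟩, fun h => hn1 h.1, fun h => hn2 h.1⟩
    · rintro (rfl | ⟨⟨hbθ, hbA⟩, hn1, hn2⟩)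
      · exact Finset.mem_filter.1 x0corner
      · refine ⟨hbθ, ?_, ?_⟩
        · intro hmem
          apply hn1
          refine ⟨hmem, ?_⟩
          intro hmemA
          obtain ⟨_, h1, h2⟩ := (hAchar _).1 hmemA
          simp only at h1
          have := htop b hbθ
          omega
        · intro hmem
          apply hn2
          refine ⟨hmem, ?_⟩
          intro hmemA
          obtain ⟨_, h1, h2⟩ := (hAchar _).1 hmemA
          simp only at h1 h2
          have hnb : ¬ (j0 - (s : ℤ) < b.2) := by
            intro h
            exact hbA ((hAchar _).2 ⟨hbθ, h1, h⟩)
          have hb2 : b.2 = j0 - (s : ℤ) := by omega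
          -- then b = y and (b.1+1, b.2) = z ∈ θ \ A, contradicting hn1
          apply hn1
          have : ((b.1 + 1, b.2) : ℤ × ℤ) = ((i0 + 1, j0 - (s : ℤ)) : ℤ × ℤ) := by
            rw [Prod.ext_iff]
            exact ⟨by simp [h1], by simp [hb2]⟩
          rw [this]
          exact Finset.mem_sdiff.1 hzmem
  · -- y not a corner of θ \ A
    rw [seCorners, Finset.mem_filter]
    rintro ⟨_, hn1, hn2⟩
    apply hn1
    have : (((i0, j0 - (s : ℤ)).1 + 1, (i0, j0 - (s : ℤ)).2) : ℤ × ℤ)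
        = ((i0 + 1, j0 - (s : ℤ)) : ℤ × ℤ) := rfl
    rw [this]
    refine Finset.mem_sdiff.2 ⟨r4, ?_⟩
    intro h
    have := ((hAchar _).1 h).2.1
    simp at this

/-- Let `θ` be a nonempty rim whose north-east arm (the largest row or column
obtained by intersecting `θ` with a square whose upper-right box `(i0,j0)` is
the rightmost box of the top row of `θ`) is connected to `θ̂ = θ` minus the
arm, with `θ̂ ≠ ∅` and `a = |θ| - |θ̂|`.  Then for every integer `p ≥ 1`,
`B(θ,p) = B(θ̂, p-a) - B(θ̂, p-a+1)`. -/

theorem Bcoef_arm_connected (n : ℕ) (hn : 0 < n) (θ : Finset (ℤ × ℤ))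
    (hθ : IsShiftedSkewDiagram n θ) (hrim : IsRim θ) (hne : θ.Nonempty)
    (i0 j0 : ℤ) (hbox : (i0, j0) ∈ θ) (htop : ∀ b ∈ θ, i0 ≤ b.1)
    (hright : ∀ b ∈ θ, b.1 = i0 → b.2 ≤ j0)
    (s : ℕ) (hs : 1 ≤ s) (harm : IsRowOrCol (armAt θ i0 j0 s))
    (hmax : ∀ s' : ℕ, 1 ≤ s' → IsRowOrCol (armAt θ i0 j0 s') → s' ≤ s)
    (θhat : Finset (ℤ × ℤ)) (hθhat : θhat = θ \ armAt θ i0 j0 s)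
    (hhatne : θhat.Nonempty)
    (hconn : ∃ b ∈ armAt θ i0 j0 s, ∃ b' ∈ θhat, Adjacent b b')
    (a : ℤ) (ha : a = (θ.card : ℤ) - (θhat.card : ℤ))
    (p : ℤ) (hp : 1 ≤ p) :
    Bcoef θ p = Bcoef θhat (p - a) - Bcoef θhat (p - a + 1) := by
  subst hθhat
  have harmsub : armAt θ i0 j0 s ⊆ θ := Finset.filter_subset _ _
  have hacard := Finset.card_le_card harmsub
  have hAa : a = ((armAt θ i0 j0 s).card : ℤ) := by
    rw [ha, Finset.card_sdiff_of_subset harmsub, Nat.cast_sub hacard]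
    ring
  rw [hAa]
  by_cases hK : ((i0 + 1, j0) : ℤ × ℤ) ∈ θ
  · exact mainK hθ hrim hbox htop hright hs harm hmax hconn hK p
  · exact mainK' hθ hrim hbox htop hright hs harm hmax hconn hK p
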